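/- Let G(q) = Σ_{k≥0} (2/((3k+1)(3k+2)))·binom(4k+1, k+1)·q^{2k+1} be the generating function of 231-avoiding uniquely sorted permutations (nonzero only in odd degrees), and define G̃(q) = q·G′(q)/G(q) − 1 as a formal power series. Then G̃ satisfies the algebraic equation (2(G̃(q)+1))⁴·q² − (G̃(q)+2)³·G̃(q) = 0. -/

import Mathlib

open PowerSeries


/-- Iterative approximations to the algebraic series `g = 1 + X²g⁴`. -/
noncomputable def stmt17phi : ℕ → PowerSeries ℚ := fun n => n.rec 1 (fun _ p => 1 + X^2 * p^4)

lemma stmt17phi_succ (n : ℕ) : stmt17phi (n+1) = 1 + X^2 * (stmt17phi n)^4 := rfl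

lemma stmt17phi_dvd (k : ℕ) : (X:PowerSeries ℚ)^(k+1) ∣ stmt17phi (k+1) - stmt17phi k := by
  induction k with
  | zero => exact ⟨X, by simp [stmt17phi_succ, stmt17phi]; ring⟩
  | succ k ih =>
    obtain ⟨c, hc⟩ := ih
    refine ⟨X * c * ((stmt17phi (k+1))^3 + (stmt17phi (k+1))^2 * stmt17phi k
      + stmt17phi (k+1) * (stmt17phi k)^2 + (stmt17phi k)^3), ?_⟩
    have e2 := stmt17phi_succ (k+1)
    have e1 := stmt17phi_succ k
    linear_combination e2 - e1 + (X^2*((stmt17phi (k+1))^3 + (stmt17phi (k+1))^2 * stmt17phi k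
      + stmt17phi (k+1) * (stmt17phi k)^2 + (stmt17phi k)^3)) * hc

lemma stmt17phi_stab {k m : ℕ} (h : k ≤ m) :
    (X:PowerSeries ℚ)^(k+1) ∣ stmt17phi m - stmt17phi k := by
  induction m, h using Nat.le_induction with
  | base => simp
  | succ m hm ih =>
    have h2 := stmt17phi_dvd m
    have : (X:PowerSeries ℚ)^(k+1) ∣ stmt17phi (m+1) - stmt17phi m :=
      dvd_trans (pow_dvd_pow X (by omega)) h2
    simpa using dvd_add this ih

/-- The algebraic power series satisfying `g = 1 + X²g⁴`. -/
noncomputable def stmt17g : PowerSeries ℚ := PowerSeries.mk fun n => coeff n (stmt17phi n)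

lemma stmt17coeff_g {n k : ℕ} (h : n ≤ k) : coeff n stmt17g = coeff n (stmt17phi k) := by
  have hd := stmt17phi_stab h
  rw [X_pow_dvd_iff] at hd
  have := hd n (by omega)
  rw [map_sub] at this
  simp only [stmt17g, coeff_mk]
  linarith

lemma stmt17g_dvd (k : ℕ) : (X:PowerSeries ℚ)^(k+1) ∣ stmt17g - stmt17phi k := by
  rw [X_pow_dvd_iff]
  intro m hm
  rw [map_sub, stmt17coeff_g (by omega : m ≤ k), sub_self]

lemma stmt17hg : stmt17g = 1 + X^2 * stmt17g^4 := by
  ext n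
  obtain ⟨c, hc⟩ := stmt17g_dvd n
  have hgsn : stmt17g = stmt17phi n + X^(n+1) * c := by linear_combination hc
  have expand : 1 + X^2 * stmt17g^4 = stmt17phi (n+1) + X^(n+1) * (X^2 * c *
      (stmt17g^3 + stmt17g^2 * stmt17phi n + stmt17g * (stmt17phi n)^2 + (stmt17phi n)^3)) := by
    rw [stmt17phi_succ n]
    linear_combination (X^2 * (stmt17g^3 + stmt17g^2 * stmt17phi n + stmt17g * (stmt17phi n)^2
      + (stmt17phi n)^3)) * hgsn
  rw [expand, map_add]
  have hz : coeff n ((X:PowerSeries ℚ)^(n+1) * (X^2 * c *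
      (stmt17g^3 + stmt17g^2 * stmt17phi n + stmt17g * (stmt17phi n)^2 + (stmt17phi n)^3))) = 0 :=
    X_pow_dvd_iff.mp (dvd_mul_right _ _) n (by omega)
  rw [hz, add_zero, ← stmt17coeff_g (Nat.le_succ n)]

lemma stmt17theta_coeff (f : PowerSeries ℚ) (n : ℕ) :
    coeff n (X * derivative ℚ f) = n * coeff n f := by
  cases n with
  | zero => simp
  | succ m =>
    rw [coeff_succ_X_mul, PowerSeries.coeff_derivative]
    push_cast; ring

lemma stmt17coeffX2 (f : PowerSeries ℚ) (n : ℕ) :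
    coeff (n+2) (X^2 * f) = coeff n f := by
  rw [show (X:PowerSeries ℚ)^2 * f = X * (X * f) by ring, coeff_succ_X_mul]
  cases n with
  | zero => rw [show (0:ℕ)+1 = 0+1 from rfl, coeff_succ_X_mul]
  | succ m => rw [coeff_succ_X_mul]

lemma stmt17key (k : ℕ) : 3*((k:ℚ)+2)*(3*k+1)*(3*k+2) * ((4*k+5).choose (k+2) : ℚ)
    = 8*(4*(k:ℚ)+5)*(4*k+3)*(2*k+1) * ((4*k+1).choose (k+1) : ℚ) := by
  have h1 : k+2 ≤ 4*k+5 := by omega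
  have h2 : k+1 ≤ 4*k+1 := by omega
  rw [Nat.cast_choose ℚ h1, Nat.cast_choose ℚ h2]
  rw [show 4*k+5 - (k+2) = 3*k+3 by omega, show 4*k+1 - (k+1) = 3*k by omega]
  have f5 : ((4*k+5).factorial : ℚ)
      = (4*(k:ℚ)+5)*(4*k+4)*(4*k+3)*(4*k+2)*((4*k+1).factorial : ℚ) := by
    rw [show 4*k+5 = (4*k+4)+1 by omega, Nat.factorial_succ,
        show 4*k+4 = (4*k+3)+1 by omega, Nat.factorial_succ,
        show 4*k+3 = (4*k+2)+1 by omega, Nat.factorial_succ,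
        show 4*k+2 = (4*k+1)+1 by omega, Nat.factorial_succ]
    push_cast; ring
  have f3 : ((3*k+3).factorial : ℚ)
      = (3*(k:ℚ)+3)*(3*k+2)*(3*k+1)*((3*k).factorial : ℚ) := by
    rw [show 3*k+3 = (3*k+2)+1 by omega, Nat.factorial_succ,
        show 3*k+2 = (3*k+1)+1 by omega, Nat.factorial_succ,
        show 3*k+1 = (3*k)+1 by omega, Nat.factorial_succ]
    push_cast; ring
  have fk : ((k+2).factorial : ℚ) = ((k:ℚ)+2)*((k+1).factorial : ℚ) := by
    rw [show k+2 = (k+1)+1 by omega, Nat.factorial_succ]; push_cast; ring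
  rw [f5, f3, fk]
  have n1 : ((k+1).factorial : ℚ) ≠ 0 := Nat.cast_ne_zero.mpr (Nat.factorial_ne_zero _)
  have n2 : ((3*k).factorial : ℚ) ≠ 0 := Nat.cast_ne_zero.mpr (Nat.factorial_ne_zero _)
  have n3 : ((k:ℚ)+2) ≠ 0 := by positivity
  have n4 : (3*(k:ℚ)+3) ≠ 0 := by positivity
  have n5 : (3*(k:ℚ)+2) ≠ 0 := by positivity
  have n6 : (3*(k:ℚ)+1) ≠ 0 := by positivity
  field_simp
  ring

lemma stmt17uniq (S : PowerSeries ℚ) (h0 : coeff 0 S = 0) (h1 : coeff 1 S = 0)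
    (hrec : ∀ m : ℕ, (27*((m:ℚ)+2)^3 + 27*((m:ℚ)+2)^2 - 3*((m:ℚ)+2) - 3) * coeff (m+2) S
      = (256*((m:ℚ)+2)^3 - 1024*((m:ℚ)+2)^2 + 1216*((m:ℚ)+2) - 384) * coeff m S) :
    S = 0 := by
  have H : ∀ n, coeff n S = 0 := by
    intro n
    induction n using Nat.strong_induction_on with
    | _ n ih =>
      match n with
      | 0 => exact h0
      | 1 => exact h1
      | (m+2) =>
        have h := hrec m
        rw [ih m (by omega), mul_zero] at h
        have hp : (27*((m:ℚ)+2)^3 + 27*((m:ℚ)+2)^2 - 3*((m:ℚ)+2) - 3) ≠ 0 := by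
          have hm : (0:ℚ) ≤ (m:ℚ) := Nat.cast_nonneg m
          nlinarith [hm, mul_nonneg hm hm, mul_nonneg (mul_nonneg hm hm) hm]
        exact (mul_eq_zero.mp h).resolve_left hp
  ext n
  rw [H n, map_zero]


set_option maxHeartbeats 1600000 in
/-- Let `G(q) = Σ_{k≥0} (2/((3k+1)(3k+2))) * binom(4k+1, k+1) * q^(2k+1)` be
the generating function of 231-avoiding uniquely sorted permutations, and let
`G̃ = q·G′/G − 1` (equivalently, `(G̃ + 1) * G = q * G′`).  Then
`(2(G̃+1))⁴·q² − (G̃+2)³·G̃ = 0`. -/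
theorem stmt_17 (G Gt : PowerSeries ℚ)
    (hGodd : ∀ k : ℕ, coeff (2 * k + 1) G =
      2 / ((3 * (k : ℚ) + 1) * (3 * (k : ℚ) + 2)) * ((4 * k + 1).choose (k + 1) : ℚ))
    (hGeven : ∀ k : ℕ, coeff (2 * k) G = 0)
    (hGt : (Gt + 1) * G = X * derivative ℚ G) :
    (2 * (Gt + 1)) ^ 4 * X ^ 2 - (Gt + 2) ^ 3 * Gt = 0 := by
  set g : PowerSeries ℚ := stmt17g with hgdef
  have hg : g = 1 + X^2 * g^4 := stmt17hg
  have d2 : derivative ℚ (2:PowerSeries ℚ) = 0 := by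
    rw [show ((2:PowerSeries ℚ)) = ((2:ℕ):PowerSeries ℚ) by norm_cast]
    exact Derivation.map_natCast _ 2
  have d3 : derivative ℚ (3:PowerSeries ℚ) = 0 := by
    rw [show ((3:PowerSeries ℚ)) = ((3:ℕ):PowerSeries ℚ) by norm_cast]
    exact Derivation.map_natCast _ 3
  have d4 : derivative ℚ (4:PowerSeries ℚ) = 0 := by
    rw [show ((4:PowerSeries ℚ)) = ((4:ℕ):PowerSeries ℚ) by norm_cast]
    exact Derivation.map_natCast _ 4
  have d6 : derivative ℚ (6:PowerSeries ℚ) = 0 := by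
    rw [show ((6:PowerSeries ℚ)) = ((6:ℕ):PowerSeries ℚ) by norm_cast]
    exact Derivation.map_natCast _ 6
  have d8 : derivative ℚ (8:PowerSeries ℚ) = 0 := by
    rw [show ((8:PowerSeries ℚ)) = ((8:ℕ):PowerSeries ℚ) by norm_cast]
    exact Derivation.map_natCast _ 8
  have d12 : derivative ℚ (12:PowerSeries ℚ) = 0 := by
    rw [show ((12:PowerSeries ℚ)) = ((12:ℕ):PowerSeries ℚ) by norm_cast]
    exact Derivation.map_natCast _ 12
  have hg0 : constantCoeff g = 1 := by
    have := congrArg (constantCoeff) hg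
    simpa using this
  have R1 : X^2 * g^4 = g - 1 := by linear_combination -hg
  have hdg : derivative ℚ g = 2*X*g^4 + 4*X^2*g^3 * derivative ℚ g := by
    have := congrArg (derivative ℚ) hg
    simp only [Derivation.leibniz, Derivation.leibniz_pow, derivative_X, map_add,
      Derivation.map_one_eq_zero, smul_eq_mul] at this ⊢
    linear_combination this
  have A1 : (X * derivative ℚ g) * (4 - 3*g) = 2*g^2 - 2*g := by
    linear_combination (X*g) * hdg + (2*g + 4*(X * derivative ℚ g)) * R1
  have A2 : (X * derivative ℚ (X * derivative ℚ g)) * (4 - 3*g)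
      = (4*g - 2) * (X * derivative ℚ g) + 3 * (X * derivative ℚ g)^2 := by
    have h := congrArg (derivative ℚ) A1
    simp only [Derivation.leibniz, Derivation.leibniz_pow, derivative_X, map_add, map_sub,
      Derivation.map_one_eq_zero, smul_eq_mul, nsmul_eq_mul, d2, d3, d4, d6, d8, d12] at h ⊢
    linear_combination X * h
  set Ga : PowerSeries ℚ := X * (2*g^2 - g^3) with hGa
  have T1 : X * derivative ℚ Ga = X * g^3 := by
    rw [hGa]
    simp only [Derivation.leibniz, Derivation.leibniz_pow, derivative_X, map_sub,
      smul_eq_mul, nsmul_eq_mul, d2, d3, d4, d6, d8, d12]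
    linear_combination (X*g) * A1
  have T2 : X * derivative ℚ (X * g^3) = X*g^3 + 3*X*g^2*(X * derivative ℚ g) := by
    simp only [Derivation.leibniz, Derivation.leibniz_pow, derivative_X, map_sub,
      smul_eq_mul, nsmul_eq_mul, d2, d3, d4, d6, d8, d12]
    ring
  have T3 : X * derivative ℚ (X*g^3 + 3*X*g^2*(X * derivative ℚ g)) =
      X*g^3 + 6*X*g^2*(X * derivative ℚ g) + 6*X*g*(X * derivative ℚ g)^2
        + 3*X*g^2*(X * derivative ℚ (X * derivative ℚ g)) := by
    simp only [Derivation.leibniz, Derivation.leibniz_pow, derivative_X, map_add, map_sub,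
      smul_eq_mul, nsmul_eq_mul, d2, d3, d4, d6, d8, d12]
    ring
  have U1 : X * derivative ℚ (X^2 * Ga) = X^3 * (4*g^2 - g^3) := by
    rw [hGa]
    simp only [Derivation.leibniz, Derivation.leibniz_pow, derivative_X, map_sub,
      smul_eq_mul, nsmul_eq_mul, d2, d3, d4, d6, d8, d12]
    linear_combination (X^3*g) * A1
  have U2 : X * derivative ℚ (X^3 * (4*g^2 - g^3)) =
      X^3*(12*g^2 - 3*g^3) + X^3*(8*g - 3*g^2)*(X * derivative ℚ g) := by
    simp only [Derivation.leibniz, Derivation.leibniz_pow, derivative_X, map_sub,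
      smul_eq_mul, nsmul_eq_mul, d2, d3, d4, d6, d8, d12]
    ring
  have U3 : X * derivative ℚ (X^3*(12*g^2 - 3*g^3) + X^3*(8*g - 3*g^2)*(X * derivative ℚ g)) =
      X^3*(36*g^2 - 9*g^3) + X^3*(48*g - 18*g^2)*(X * derivative ℚ g)
        + X^3*(8 - 6*g)*(X * derivative ℚ g)^2
        + X^3*(8*g - 3*g^2)*(X * derivative ℚ (X * derivative ℚ g)) := by
    simp only [Derivation.leibniz, Derivation.leibniz_pow, derivative_X, map_add, map_sub,
      smul_eq_mul, nsmul_eq_mul, d2, d3, d4, d6, d8, d12]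
    ring
  have hwne : ((4:PowerSeries ℚ) - 3*g)^3 ≠ 0 := by
    apply pow_ne_zero
    intro h0
    have := congrArg (constantCoeff) h0
    rw [map_sub, map_mul, hg0, map_ofNat, map_ofNat] at this
    norm_num at this
  have hode : 27*(X * derivative ℚ (X * derivative ℚ (X * derivative ℚ Ga)))
      + 27*(X * derivative ℚ (X * derivative ℚ Ga)) - 3*(X * derivative ℚ Ga) - 3*Ga
      - 256*(X * derivative ℚ (X * derivative ℚ (X * derivative ℚ (X^2 * Ga))))
      + 1024*(X * derivative ℚ (X * derivative ℚ (X^2 * Ga)))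
      - 1216*(X * derivative ℚ (X^2 * Ga)) + 384*(X^2 * Ga) = 48 * X := by
    rw [T1, T2, T3, U1, U2, U3, hGa]
    refine sub_eq_zero.mp ((mul_eq_zero.mp ?_).resolve_left hwne)
    linear_combination
      (1296*X*g^2 + (-1944)*X*g^3 + 729*X*g^4 + (-32768)*X^3*g + 61440*X^3*g^2
        + (-36864)*X^3*g^3 + 6912*X^3*g^4) * A2
      + (2592*X*g*(X * derivative ℚ g) + 1944*X*g^2 + (-2916)*X*g^2*(X * derivative ℚ g)
        + (-2268)*X*g^3 + 729*X*g^3*(X * derivative ℚ g) + 729*X*g^4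
        + (-32768)*X^3*(X * derivative ℚ g) + (-32768)*X^3*g + 49152*X^3*g*(X * derivative ℚ g)
        + 43008*X^3*g^2 + (-27648)*X^3*g^2*(X * derivative ℚ g) + (-15360)*X^3*g^3
        + 6912*X^3*g^3*(X * derivative ℚ g)) * A1
      + ((-3072)*X + 3840*X*g + (-1728)*X*g^2) * R1
  -- coefficient recurrence for Ga
  have hrecA : ∀ m : ℕ, (27*((m:ℚ)+2)^3 + 27*((m:ℚ)+2)^2 - 3*((m:ℚ)+2) - 3) * coeff (m+2) Ga
      = (256*((m:ℚ)+2)^3 - 1024*((m:ℚ)+2)^2 + 1216*((m:ℚ)+2) - 384) * coeff m Ga := by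
    intro m
    have h := congrArg (coeff (m+2)) hode
    simp only [map_add, map_sub,
      show (27:PowerSeries ℚ) = C 27 from (map_ofNat (C (R := ℚ)) 27).symm,
      show (3:PowerSeries ℚ) = C 3 from (map_ofNat (C (R := ℚ)) 3).symm,
      show (256:PowerSeries ℚ) = C 256 from (map_ofNat (C (R := ℚ)) 256).symm,
      show (1024:PowerSeries ℚ) = C 1024 from (map_ofNat (C (R := ℚ)) 1024).symm,
      show (1216:PowerSeries ℚ) = C 1216 from (map_ofNat (C (R := ℚ)) 1216).symm,
      show (384:PowerSeries ℚ) = C 384 from (map_ofNat (C (R := ℚ)) 384).symm,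
      show (48:PowerSeries ℚ) = C 48 from (map_ofNat (C (R := ℚ)) 48).symm,
      coeff_C_mul, stmt17theta_coeff, stmt17coeffX2, coeff_X] at h
    norm_num at h
    push_cast at h ⊢
    linear_combination h
  -- coefficient recurrence for G
  have hrecG : ∀ m : ℕ, (27*((m:ℚ)+2)^3 + 27*((m:ℚ)+2)^2 - 3*((m:ℚ)+2) - 3) * coeff (m+2) G
      = (256*((m:ℚ)+2)^3 - 1024*((m:ℚ)+2)^2 + 1216*((m:ℚ)+2) - 384) * coeff m G := by
    intro m
    rcases Nat.even_or_odd m with ⟨k, hk⟩ | ⟨k, hk⟩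
    · subst hk
      rw [show k+k+2 = 2*(k+1) by ring, hGeven (k+1), show (k:ℕ)+k = 2*k by ring, hGeven k]
      ring
    · subst hk
      rw [show 2*k+1+2 = 2*(k+1)+1 by ring, hGodd (k+1), hGodd k]
      have n4 : (3*((k:ℚ)+1)+1) ≠ 0 := by positivity
      have n5 : (3*((k:ℚ)+1)+2) ≠ 0 := by positivity
      have n6 : (3*(k:ℚ)+1) ≠ 0 := by positivity
      have n7 : (3*(k:ℚ)+2) ≠ 0 := by positivity
      have hkey := stmt17key k
      rw [show (4*(k+1)+1) = 4*k+5 by ring, show ((k+1)+1) = k+2 by ring]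
      push_cast
      field_simp
      linear_combination (8*(3*(k:ℚ)+4)*(3*k+5)) * hkey
  -- base coefficients
  have c0G : coeff 0 G = 0 := by simpa using hGeven 0
  have c1G : coeff 1 G = 1 := by
    have := hGodd 0
    norm_num at this
    simpa using this
  have c0A : coeff 0 Ga = 0 := by
    rw [hGa, coeff_zero_eq_constantCoeff, map_mul, constantCoeff_X, zero_mul]
  have c1A : coeff 1 Ga = 1 := by
    rw [hGa]; show coeff (0+1) (X * (2 * g ^ 2 - g ^ 3)) = 1; rw [coeff_succ_X_mul, coeff_zero_eq_constantCoeff]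
    rw [map_sub, map_mul, map_pow, map_pow, hg0, map_ofNat]
    norm_num
  -- uniqueness: G = Ga
  have hGeq : G = Ga := by
    have hz := stmt17uniq (G - Ga) (by rw [map_sub, c0G, c0A, sub_zero])
      (by rw [map_sub, c1G, c1A, sub_self])
      (by
        intro m
        rw [map_sub, map_sub]
        linear_combination hrecG m - hrecA m)
    linear_combination hz
  -- final algebra
  rw [hGeq] at hGt
  rw [T1] at hGt
  have hGane : Ga ≠ 0 := by
    intro h0
    rw [h0, map_zero] at c1A
    norm_num at c1A
  have key2 : ((2 * (Gt + 1)) ^ 4 * X ^ 2 - (Gt + 2) ^ 3 * Gt) * Ga^4 = 0 := by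
    rw [hGa] at hGt ⊢
    linear_combination
      ((-1)*((Gt+1)*(X*(2*g^2 - g^3)))^3 + (-4)*X*g^2*((Gt+1)*(X*(2*g^2 - g^3)))^2
        + X*g^3*((Gt+1)*(X*(2*g^2 - g^3)))^2 + 16*X^2*((Gt+1)*(X*(2*g^2 - g^3)))^3
        + (-4)*X^2*g^5*((Gt+1)*(X*(2*g^2 - g^3))) + X^2*g^6*((Gt+1)*(X*(2*g^2 - g^3)))
        + 16*X^3*g^3*((Gt+1)*(X*(2*g^2 - g^3)))^2 + 16*X^3*g^6 + (-24)*X^3*g^7 + 8*X^3*g^8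
        + (-1)*X^3*g^9 + 16*X^4*g^6*((Gt+1)*(X*(2*g^2 - g^3))) + 16*X^5*g^9) * hGt
      + (16*X^4*g^8) * R1
  exact (mul_eq_zero.mp key2).resolve_right (pow_ne_zero 4 hGane)
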